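/- Let L ⊆ Σ* be a language, let m, k ∈ ℕ, and let R_{i,j} ⊆ Σ* for i ∈ [1,m], j ∈ [1,k] be languages such that L ⊆ ⋃_{i=1}^m R_{i,1}⋯R_{i,k} and R_{i,1} × ⋯ × R_{i,k} ⊆ F_k(L) for every i ∈ [1,m]. Set R = ⋃_{i=1}^m R_{i,1}⋯R_{i,k}. Then for every n ∈ ℕ and every n-dimensional unboundedness predicate p over Σ, p(F_n(L)) holds if and only if p(F_n(R)) holds. -/

import Mathlib

/-- Kleene star of a language, as a set of lists. -/
def LangStar {α : Type*} (K : Set (List α)) : Set (List α) :=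
  {w | ∃ ws : List (List α), (∀ u ∈ ws, u ∈ K) ∧ w = ws.flatten}

/-- Concatenation of two languages. -/
def LangConc {α : Type*} (K L : Set (List α)) : Set (List α) :=
  {w | ∃ u ∈ K, ∃ v ∈ L, w = u ++ v}

/-- Concatenation `L 0 · L 1 ⋯ L (k-1)` of a finite family of languages. -/
def LangConcFn {α : Type*} {k : ℕ} (Ls : Fin k → Set (List α)) : Set (List α) :=
  {w | ∃ ws : Fin k → List α, (∀ j, ws j ∈ Ls j) ∧ w = (List.ofFn ws).flatten}

/-- `w ^ x` : the `x`-fold repetition of the word `w`. -/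
def wpow {α : Type*} (w : List α) (x : ℕ) : List α := (List.replicate x w).flatten

/-- The set of factors `F(L) = {w : L ∩ Σ*wΣ* ≠ ∅}`. -/
def Factors {α : Type*} (L : Set (List α)) : Set (List α) :=
  {w | ∃ u ∈ L, ∃ x y : List α, u = x ++ w ++ y}

/-- The set of factor tuples
`F_n(L) = {(w1,…,wn) : Σ*w1Σ*w2Σ*⋯wnΣ* ∩ L ≠ ∅}`. -/
def FactorTuples {α : Type*} (n : ℕ) (L : Set (List α)) : Set (Fin n → List α) :=
  {w | ∃ u ∈ L, ∃ g : Fin (n + 1) → List α,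
      u = (List.ofFn fun i : Fin n => g i.castSucc ++ w i).flatten ++ g (Fin.last n)}

/-- A language is bounded if `L ⊆ w1* ⋯ wn*` for some words `w1,…,wn`. -/
def IsBoundedLang {α : Type*} (L : Set (List α)) : Prop :=
  ∃ (n : ℕ) (ws : Fin n → List α), L ⊆ LangConcFn fun i => LangStar {ws i}

/-- A language is regular if it is accepted by a finite (deterministic) automaton. -/
def IsRegularLang {α : Type*} (L : Set (List α)) : Prop :=
  ∃ (σ : Type) (_ : Fintype σ) (M : DFA α σ), ∀ w, w ∈ M.accepts ↔ w ∈ L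

/-- `FireList T v ts v'` : firing the sequence `ts` of transitions (all from `T`)
leads from configuration `v` to `v'`, keeping all intermediate configurations
nonnegative (automatic, as configurations live in `Fin d → ℕ`). -/
def FireList {d : ℕ} (T : Set (Fin d → ℤ)) :
    (Fin d → ℕ) → List (Fin d → ℤ) → (Fin d → ℕ) → Prop
  | v, [], v' => v = v'
  | v, τ :: ts, v' => τ ∈ T ∧ ∃ u : Fin d → ℕ,
      (∀ i, (u i : ℤ) = (v i : ℤ) + τ i) ∧ FireList T u ts v'

/-- A labeled vector addition system over the alphabet `α`. -/
structure LVAS (α : Type*) where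
  d : ℕ
  T : Finset (Fin d → ℤ)
  s : Fin d → ℕ
  t : Fin d → ℕ
  /-- the labeling `h : T → Σ ∪ {ε}`, with `none` playing the role of `ε` -/
  lab : (Fin d → ℤ) → Option α

/-- The language of a labeled VAS: labels of firing sequences from source to target. -/
def LVAS.lang {α : Type*} (V : LVAS α) : Set (List α) :=
  {w | ∃ ts : List (Fin V.d → ℤ), FireList (↑V.T) V.s ts V.t ∧ ts.filterMap V.lab = w}

/-- A VAS language is the language of some labeled VAS. -/
def IsVASLang {α : Type*} (L : Set (List α)) : Prop := ∃ V : LVAS α, L = V.lang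

/-- Given a decomposition `n = ns 0 + ⋯ + ns (k-1)`, the index in `Fin n` of the
`i`-th position of the `j`-th block. -/
def blockIdx {k n : ℕ} (ns : Fin k → ℕ) (h : ∑ j, ns j = n) (j : Fin k)
    (i : Fin (ns j)) : Fin n :=
  ⟨(∑ j' ∈ Finset.univ.filter (fun j' => j' < j), ns j') + (i : ℕ), by
    have hj : j ∉ Finset.univ.filter (fun j' => j' < j) := by simp
    have h1 : ∑ j' ∈ insert j (Finset.univ.filter (fun j' => j' < j)), ns j'
        ≤ ∑ j', ns j' := Finset.sum_le_sum_of_subset (Finset.subset_univ _)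
    rw [Finset.sum_insert hj] at h1
    have h2 := i.isLt
    omega⟩

/-- The product set `F_{n1}(L1) × ⋯ × F_{nk}(Lk) ⊆ (Σ*)^n` for a decomposition
`n = n1 + ⋯ + nk`: those `n`-tuples whose `j`-th block belongs to `F_{nj}(Lj)`. -/
def ProdFT {α : Type*} {k n : ℕ} (ns : Fin k → ℕ) (Ls : Fin k → Set (List α))
    (h : ∑ j, ns j = n) : Set (Fin n → List α) :=
  {w | ∀ j : Fin k,
    (fun i : Fin (ns j) => w (blockIdx ns h j i)) ∈ FactorTuples (ns j) (Ls j)}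

/-- An `n`-dimensional unboundedness predicate. -/
def IsUnbPred {α : Type*} (n : ℕ) (p : Set (Fin n → List α) → Prop) : Prop :=
  (∀ S T : Set (Fin n → List α), p S → S ⊆ T → p T) ∧
  (∀ S T : Set (Fin n → List α), p (S ∪ T) → p S ∨ p T) ∧
  (∀ (k : ℕ) (Ls : Fin k → Set (List α)), p (FactorTuples n (LangConcFn Ls)) →
     ∃ (ns : Fin k → ℕ) (h : ∑ j, ns j = n), p (ProdFT ns Ls h))

/-- Downward closure of a set of `n`-tuples of words w.r.t. the (scattered) subword
ordering in each component. -/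
def dclT {α : Type*} {n : ℕ} (S : Set (Fin n → List α)) : Set (Fin n → List α) :=
  {u | ∃ v ∈ S, ∀ i, List.Sublist (u i) (v i)}

/-- `numF K w = |w|_K`, the largest `m` such that `m` non-overlapping factors from `K`
occur in `w` in order. -/
noncomputable def numF {α : Type*} (K : Set (List α)) (w : List α) : ℕ :=
  sSup {m | ∃ ws : Fin m → List α, (∀ i, ws i ∈ K) ∧ ws ∈ FactorTuples m {w}}

/-- `cWrap c L = cLc = {cuc : u ∈ L}`. -/
def cWrap {α : Type*} (c : α) (L : Set (List α)) : Set (List α) :=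
  {w | ∃ u ∈ L, w = c :: (u ++ [c])}

/-- `cSepStar c L = c(Lc)* = {c u1 c u2 c ⋯ um c : m ≥ 0, u1,…,um ∈ L}`. -/
def cSepStar {α : Type*} (c : α) (L : Set (List α)) : Set (List α) :=
  {w | ∃ us : List (List α), (∀ u ∈ us, u ∈ L) ∧
      w = c :: (us.map (fun u => u ++ [c])).flatten}

/-- A subset of `ℕ^n` is recognizable if it is saturated by an additive monoid
morphism into a finite monoid. -/
def IsRecognizable {n : ℕ} (U : Set (Fin n → ℕ)) : Prop :=
  ∃ (M : Type) (_ : AddMonoid M) (_ : Finite M) (φ : (Fin n → ℕ) →+ M),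
    U = φ ⁻¹' (φ '' U)

/-- `U ⊆ ℕ^n` is a section of a VAS reachability set. -/
def IsVASReachSection {n : ℕ} (U : Set (Fin n → ℕ)) : Prop :=
  ∃ (N : ℕ) (T : Finset (Fin N → ℤ)) (s : Fin N → ℕ) (I : Finset (Fin N))
    (x : Fin N → ℕ) (e : Fin n → Fin N),
    StrictMono e ∧ (∀ j, e j ∉ I) ∧ (∀ i, i ∉ I → ∃ j, e j = i) ∧
    U = {u | ∃ v : Fin N → ℕ, (∃ ts, FireList (↑T) s ts v) ∧
          (∀ i ∈ I, v i = x i) ∧ (∀ j, v (e j) = u j)}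


/-! ### Auxiliary machinery for the proof -/

/-- `OF ws u` : the words in `ws` occur in `u` as non-overlapping factors, in order. -/
def OF {α : Type*} : List (List α) → List α → Prop
  | [], _ => True
  | w :: ws, u => ∃ x y : List α, u = x ++ w ++ y ∧ OF ws y

lemma OF_prefix {α : Type*} : ∀ (ws : List (List α)) (z y : List α), OF ws y → OF ws (z ++ y)
  | [], _, _, _ => trivial
  | w :: ws, z, y, ⟨x, y', hy, h⟩ => ⟨z ++ x, y', by simp [hy], h⟩

lemma OF_app {α : Type*} : ∀ (as bs : List (List α)) (x u y : List α),
    OF as u → OF bs y → OF (as ++ bs) (x ++ u ++ y)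
  | [], bs, x, u, y, _, hb => by
      have := OF_prefix bs (x ++ u) y hb
      simpa [List.append_assoc] using this
  | a :: as, bs, x, u, y, h, hb => by
      obtain ⟨xa, ya, hu, ha⟩ := h
      refine ⟨x ++ xa, ya ++ y, by simp [hu], ?_⟩
      have := OF_app as bs [] ya y ha hb
      simpa using this

lemma OF_comp {α : Type*} : ∀ {k : ℕ} (wss : Fin k → List (List α)) (us : Fin k → List α)
    (v : List α), (∀ j, OF (wss j) (us j)) → OF (List.ofFn us) v →
    OF (List.ofFn wss).flatten v := by
  intro k
  induction k with
  | zero => intro wss us v _ _; simp [OF]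
  | succ k ih =>
    intro wss us v h hv
    rw [List.ofFn_succ] at hv ⊢
    obtain ⟨x, y, rfl, hy⟩ := hv
    rw [List.flatten_cons]
    exact OF_app _ _ x (us 0) y (h 0) (ih _ _ _ (fun j => h j.succ) hy)

lemma OF_of_form {α : Type*} : ∀ {n : ℕ} (w : Fin n → List α) (g : Fin (n+1) → List α),
    OF (List.ofFn w) ((List.ofFn fun i : Fin n => g i.castSucc ++ w i).flatten ++ g (Fin.last n)) := by
  intro n
  induction n with
  | zero => intro w g; simp [OF]
  | succ n ih =>
    intro w g
    rw [List.ofFn_succ]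
    refine ⟨g 0, (List.ofFn fun i : Fin n => g i.succ.castSucc ++ w i.succ).flatten
      ++ g (Fin.last (n+1)), ?_, ?_⟩
    · rw [List.ofFn_succ (f := fun i : Fin (n+1) => g i.castSucc ++ w i)]
      simp [List.append_assoc]
    · have := ih (fun i => w i.succ) (fun i => g i.succ)
      simpa only [Fin.succ_castSucc, Fin.succ_last] using this

lemma form_of_OF {α : Type*} : ∀ {n : ℕ} (w : Fin n → List α) (u : List α), OF (List.ofFn w) u →
    ∃ g : Fin (n+1) → List α,
      u = (List.ofFn fun i : Fin n => g i.castSucc ++ w i).flatten ++ g (Fin.last n) := by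
  intro n
  induction n with
  | zero => intro w u _; exact ⟨fun _ => u, by simp⟩
  | succ n ih =>
    intro w u h
    rw [List.ofFn_succ] at h
    obtain ⟨x, y, rfl, hy⟩ := h
    obtain ⟨g', hg'⟩ := ih (fun i => w i.succ) y hy
    refine ⟨Fin.cases x g', ?_⟩
    rw [List.ofFn_succ (f := fun i : Fin (n+1) => Fin.cases x g' i.castSucc ++ w i)]
    have hl : (Fin.last (n+1)) = (Fin.last n).succ := rfl
    have e1 : (fun i : Fin n => Fin.cases (motive := fun _ => List α) x g' i.succ.castSucc ++ w i.succ)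
        = fun i => g' i.castSucc ++ w i.succ := by
      funext i
      rw [← Fin.succ_castSucc, Fin.cases_succ]
    rw [List.flatten_cons, e1, hl]
    simp only [Fin.cases_succ, Fin.castSucc_zero, Fin.cases_zero]
    rw [hg']
    simp [List.append_assoc]

lemma mem_ft_iff {α : Type*} {n : ℕ} (L : Set (List α)) (w : Fin n → List α) :
    w ∈ FactorTuples n L ↔ ∃ u ∈ L, OF (List.ofFn w) u := by
  constructor
  · rintro ⟨u, hu, g, rfl⟩; exact ⟨_, hu, OF_of_form w g⟩
  · rintro ⟨u, hu, h⟩; obtain ⟨g, hg⟩ := form_of_OF w u h; exact ⟨u, hu, g, hg⟩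

lemma blockIdx_zero {k n : ℕ} (ns : Fin (k+1) → ℕ) (h : ∑ j, ns j = n)
    (i : Fin (ns 0)) : ((blockIdx ns h 0 i : Fin n) : ℕ) = (i : ℕ) := by
  show (∑ j' ∈ Finset.univ.filter (fun j' => j' < (0 : Fin (k+1))), ns j') + (i : ℕ) = i
  rw [Finset.filter_false_of_mem (fun x _ => Fin.not_lt_zero x), Finset.sum_empty]
  omega

lemma filter_succ {k : ℕ} (j : Fin k) :
    (Finset.univ.filter (fun j' : Fin (k+1) => j' < j.succ))
      = insert 0 ((Finset.univ.filter (fun j' : Fin k => j' < j)).map (Fin.succEmb k)) := by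
  ext j'
  simp only [Finset.mem_filter, Finset.mem_univ, true_and, Finset.mem_insert, Finset.mem_map,
    Fin.succEmb]
  induction j' using Fin.cases with
  | zero => simp [Fin.succ_pos]
  | succ s =>
    simp only [Fin.succ_lt_succ_iff]
    constructor
    · intro hs; exact Or.inr ⟨s, hs, rfl⟩
    · rintro (h0 | ⟨r, hr, hre⟩)
      · exact absurd h0 (Fin.succ_ne_zero s)
      · have : r = s := Fin.succ_injective _ hre
        exact this ▸ hr

lemma blockIdx_succ {k n : ℕ} (ns : Fin (k+1) → ℕ) (h : ∑ j, ns j = n)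
    {n' : ℕ} (h' : ∑ j : Fin k, ns j.succ = n') (j : Fin k) (i : Fin (ns j.succ)) :
    ((blockIdx ns h j.succ i : Fin n) : ℕ)
      = ns 0 + ((blockIdx (fun j => ns j.succ) h' j i : Fin n') : ℕ) := by
  show (∑ j' ∈ Finset.univ.filter (fun j' : Fin (k+1) => j' < j.succ), ns j') + (i : ℕ)
      = ns 0 + ((∑ j' ∈ Finset.univ.filter (fun j' : Fin k => j' < j), ns j'.succ) + (i : ℕ))
  rw [filter_succ, Finset.sum_insert (by simp [Fin.succ_ne_zero]), Finset.sum_map]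
  simp [Fin.succEmb]
  omega

lemma ofFn_blocks {α : Type*} : ∀ {k n : ℕ} (ns : Fin k → ℕ) (h : ∑ j, ns j = n)
    (w : Fin n → List α),
    (List.ofFn fun j => List.ofFn fun i => w (blockIdx ns h j i)).flatten = List.ofFn w := by
  intro k
  induction k with
  | zero =>
    intro n ns h w
    obtain rfl : n = 0 := by simpa using h.symm
    simp
  | succ k ih =>
    intro n ns h w
    have h' : ns 0 + ∑ j : Fin k, ns j.succ = n := by rw [← h, Fin.sum_univ_succ]
    subst h'
    rw [List.ofFn_succ, List.flatten_cons, List.ofFn_add (f := w)]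
    congr 1
    · congr 1
      funext i
      congr 1
      exact Fin.ext (by rw [blockIdx_zero]; rfl)
    · have := ih (fun j => ns j.succ) rfl (fun r => w (Fin.natAdd (ns 0) r))
      rw [← this]
      refine congrArg List.flatten ?_
      refine congrArg List.ofFn (funext fun j => ?_)
      refine congrArg List.ofFn (funext fun i => ?_)
      refine congrArg w (Fin.ext ?_)
      rw [blockIdx_succ ns _ rfl j i]
      rfl

lemma ft_mono {α : Type*} {n : ℕ} {L L' : Set (List α)} (h : L ⊆ L') :
    FactorTuples n L ⊆ FactorTuples n L' :=
  fun _ ⟨u, hu, g, hg⟩ => ⟨u, h hu, g, hg⟩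

lemma ft_iUnion {α : Type*} {ι : Type*} (n : ℕ) (S : ι → Set (List α)) :
    FactorTuples n (⋃ i, S i) = ⋃ i, FactorTuples n (S i) := by
  ext w
  constructor
  · rintro ⟨u, hu, g, hg⟩
    obtain ⟨i, hi⟩ := Set.mem_iUnion.1 hu
    exact Set.mem_iUnion.2 ⟨i, u, hi, g, hg⟩
  · intro hw
    obtain ⟨i, u, hu, g, hg⟩ := Set.mem_iUnion.1 hw
    exact ⟨u, Set.mem_iUnion.2 ⟨i, hu⟩, g, hg⟩

lemma union_split {α : Type*} {n : ℕ} {p : Set (Fin n → List α) → Prop}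
    (hp : ∀ S T : Set (Fin n → List α), p (S ∪ T) → p S ∨ p T) :
    ∀ (m : ℕ) (S : Fin m → Set (Fin n → List α)), p (⋃ i, S i) → (∃ i, p (S i)) ∨ p ∅ := by
  intro m
  induction m with
  | zero => intro S hps; right; simpa using hps
  | succ m ih =>
    intro S hps
    have hU : (⋃ i, S i) = S 0 ∪ ⋃ i : Fin m, S i.succ := by
      ext x; simp [Set.mem_iUnion, Fin.exists_fin_succ]
    rw [hU] at hps
    rcases hp _ _ hps with h0 | hs
    · exact Or.inl ⟨0, h0⟩
    · rcases ih _ hs with ⟨i, hi⟩ | he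
      · exact Or.inl ⟨i.succ, hi⟩
      · exact Or.inr he

lemma prodft_subset {α : Type*} {k n : ℕ} (L : Set (List α)) (Ls : Fin k → Set (List α))
    (ns : Fin k → ℕ) (h : ∑ j, ns j = n)
    (hL : {u : Fin k → List α | ∀ j, u j ∈ Ls j} ⊆ FactorTuples k L) :
    ProdFT ns Ls h ⊆ FactorTuples n L := by
  intro w hw
  choose u hu hOF using fun j => (mem_ft_iff (Ls j) _).1 (hw j)
  obtain ⟨v, hv, hOFv⟩ := (mem_ft_iff L u).1 (hL hu)
  rw [mem_ft_iff]
  refine ⟨v, hv, ?_⟩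
  rw [← ofFn_blocks ns h w]
  exact OF_comp _ u v hOF hOFv

/-- If `L ⊆ ⋃_{i=1}^m R_{i,1}⋯R_{i,k}` and
`R_{i,1} × ⋯ × R_{i,k} ⊆ F_k(L)` for every `i`, then with
`R = ⋃_{i=1}^m R_{i,1}⋯R_{i,k}`, for every `n`-dimensional unboundedness predicate
`p` we have `p(F_n(L)) ↔ p(F_n(R))`. -/
theorem unboundedness_pred_of_approx {α : Type} [Fintype α]
    (L : Set (List α)) (m k : ℕ) (R : Fin m → Fin k → Set (List α))
    (Rall : Set (List α)) (hRall : Rall = ⋃ i, LangConcFn (R i))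
    (h1 : L ⊆ ⋃ i, LangConcFn (R i))
    (h2 : ∀ i, {w : Fin k → List α | ∀ j, w j ∈ R i j} ⊆ FactorTuples k L) :
    ∀ (n : ℕ) (p : Set (Fin n → List α) → Prop), IsUnbPred n p →
      (p (FactorTuples n L) ↔ p (FactorTuples n Rall)) := by
  intro n p hp
  obtain ⟨hmono, hsplit, hdecomp⟩ := hp
  subst hRall
  constructor
  · intro hL
    exact hmono _ _ hL (ft_mono h1)
  · intro hR
    rw [ft_iUnion] at hR
    rcases union_split hsplit m _ hR with ⟨i, hi⟩ | he
    · obtain ⟨ns, hsum, hpp⟩ := hdecomp k (R i) hi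
      exact hmono _ _ hpp (prodft_subset L (R i) ns hsum (h2 i))
    · exact hmono _ _ he (Set.empty_subset _)
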